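/- Let I be a countable set and c : (I →₀ ℕ) → ℝ≥0 a family of coefficients indexed by finitely supported multi-indices; let f(z) = ∑_μ c_μ · z^μ ∈ [0,∞] for z : I → ℝ≥0. Then for all x, u : I → ℝ≥0 one has, in [0,∞]: f(x) + ∑_{a∈I} u(a) · ( ∑_μ (μ(a)+1) · c_{μ+δ_a} · x^μ ) ≤ f(x+u), where μ + δ_a is the multi-index μ with its value at a increased by 1. -/

import Mathlib

open scoped NNReal ENNReal

open Finset in
lemma aux_pow (X U : ℝ≥0∞) : ∀ n : ℕ, X ^ n + (n : ℝ≥0∞) * U * X ^ (n - 1) ≤ (X + U) ^ n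
  | 0 => by simp
  | 1 => by simp
  | (n + 2) => by
      have ih := aux_pow X U (n + 1)
      have h1 : X ^ (n + 2) + ((n + 2 : ℕ) : ℝ≥0∞) * U * X ^ (n + 2 - 1)
          = X * (X ^ (n + 1) + ((n + 1 : ℕ) : ℝ≥0∞) * U * X ^ (n + 1 - 1))
            + U * X ^ (n + 1) := by
        push_cast
        ring
      rw [h1]
      have h2 : U * X ^ (n + 1) ≤ U * (X + U) ^ (n + 1) :=
        mul_le_mul_right (pow_le_pow_left₀ (zero_le (a := X)) le_self_add _) _
      calc X * (X ^ (n + 1) + ((n + 1 : ℕ) : ℝ≥0∞) * U * X ^ (n + 1 - 1)) + U * X ^ (n + 1)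
          ≤ X * (X + U) ^ (n + 1) + U * (X + U) ^ (n + 1) :=
            add_le_add (mul_le_mul_right ih _) h2
        _ = (X + U) ^ (n + 2) := by ring

lemma aux_fin {I : Type*} [DecidableEq I] (s : Finset I) (X U : I → ℝ≥0∞) (μ : I → ℕ) :
    (∏ b ∈ s, X b ^ μ b) +
      ∑ a ∈ s, (μ a : ℝ≥0∞) * U a * X a ^ (μ a - 1) * ∏ b ∈ s.erase a, X b ^ μ b
      ≤ ∏ b ∈ s, (X b + U b) ^ μ b := by
  set B : I → ℝ≥0∞ := fun b => (μ b : ℝ≥0∞) * U b * X b ^ (μ b - 1) with hB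
  set A : I → ℝ≥0∞ := fun b => X b ^ μ b with hA
  have step1 : (∏ b ∈ s, A b) + ∑ a ∈ s, B a * ∏ b ∈ s.erase a, A b
      ≤ ∏ b ∈ s, (B b + A b) := by
    rw [Finset.prod_add]
    have hsub : insert (∅ : Finset I) (s.image fun a => {a}) ⊆ s.powerset := by
      intro t ht
      rcases Finset.mem_insert.1 ht with h | h
      · simp [h]
      · obtain ⟨a, ha, rfl⟩ := Finset.mem_image.1 h
        simp [Finset.singleton_subset_iff, ha]
    refine le_trans (le_of_eq ?_) (Finset.sum_le_sum_of_subset hsub)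
    have hnotmem : (∅ : Finset I) ∉ s.image fun a => ({a} : Finset I) := by
      simp only [Finset.mem_image, not_exists, not_and]
      intro a _ h
      exact Finset.singleton_ne_empty a h
    rw [Finset.sum_insert hnotmem]
    rw [Finset.sum_image (fun a _ b _ h => Finset.singleton_injective h)]
    congr 1
    · simp
    · refine Finset.sum_congr rfl fun a ha => ?_
      rw [Finset.prod_singleton, Finset.sdiff_singleton_eq_erase]
  have step2 : ∏ b ∈ s, (B b + A b) ≤ ∏ b ∈ s, (X b + U b) ^ μ b := by
    refine Finset.prod_le_prod' fun b _ => ?_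
    rw [add_comm (B b) (A b)]
    exact aux_pow (X b) (U b) (μ b)
  calc _ ≤ _ := step1
    _ ≤ _ := step2

/-- The power series with nonnegative coefficients `c` indexed by finitely supported
multi-indices, evaluated at `z : I → ℝ≥0`, in `[0,∞]`. -/
noncomputable def powerSeries {I : Type*} (c : (I →₀ ℕ) → ℝ≥0) (z : I → ℝ≥0) : ℝ≥0∞ :=
  ∑' μ : I →₀ ℕ, (c μ : ℝ≥0∞) * μ.prod (fun a n => (z a : ℝ≥0∞) ^ n)

/-- The constant plus linear part of the expansion of `f(x+u)` is bounded by `f(x+u)`: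
`f(x) + ∑_a u a * (∑_μ (μ a + 1) * c_{μ + δ_a} * x^μ) ≤ f(x+u)`. -/
theorem stmt6 {I : Type*} [Countable I] (c : (I →₀ ℕ) → ℝ≥0) (x u : I → ℝ≥0) :
    powerSeries c x +
      ∑' a : I, (u a : ℝ≥0∞) *
        ∑' μ : I →₀ ℕ, ((μ a : ℝ≥0∞) + 1) * (c (μ + Finsupp.single a 1) : ℝ≥0∞) *
          μ.prod (fun b n => (x b : ℝ≥0∞) ^ n)
    ≤ powerSeries c (fun a => x a + u a) := by
  classical
  set Xp : (I →₀ ℕ) → ℝ≥0∞ := fun ν => ν.prod fun b n => (x b : ℝ≥0∞) ^ n with hXp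
  set g : I → (I →₀ ℕ) → ℝ≥0∞ := fun a μ =>
    (u a : ℝ≥0∞) * (μ a : ℝ≥0∞) * (c μ : ℝ≥0∞) * Xp (μ - Finsupp.single a 1) with hg
  have claim1 : ∀ a : I, (u a : ℝ≥0∞) *
      ∑' μ : I →₀ ℕ, ((μ a : ℝ≥0∞) + 1) * (c (μ + Finsupp.single a 1) : ℝ≥0∞) * Xp μ
      = ∑' μ : I →₀ ℕ, g a μ := by
    intro a
    rw [← ENNReal.tsum_mul_left]
    have hinj : Function.Injective (fun ν : I →₀ ℕ => ν + Finsupp.single a 1) :=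
      add_left_injective _
    have hsupp : Function.support (g a) ⊆
        Set.range (fun ν : I →₀ ℕ => ν + Finsupp.single a 1) := by
      intro μ hμ
      have hμa : μ a ≠ 0 := by
        intro h
        apply hμ
        simp [hg, h]
      have hle : Finsupp.single a 1 ≤ μ :=
        Finsupp.single_le_iff.2 (Nat.one_le_iff_ne_zero.2 hμa)
      exact ⟨μ - Finsupp.single a 1, tsub_add_cancel_of_le hle⟩
    rw [← hinj.tsum_eq hsupp]
    refine tsum_congr fun ν => ?_
    have h2 : ν + Finsupp.single a 1 - Finsupp.single a 1 = ν := add_tsub_cancel_right _ _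
    simp only [hg, h2, Finsupp.add_apply, Finsupp.single_eq_same]
    push_cast
    ring
  have hrw : (∑' a : I, (u a : ℝ≥0∞) *
      ∑' μ : I →₀ ℕ, ((μ a : ℝ≥0∞) + 1) * (c (μ + Finsupp.single a 1) : ℝ≥0∞) *
        μ.prod (fun b n => (x b : ℝ≥0∞) ^ n))
      = ∑' μ : I →₀ ℕ, ∑' a : I, g a μ := by
    rw [tsum_congr claim1, ENNReal.tsum_comm]
  rw [hrw]
  unfold powerSeries
  rw [← ENNReal.tsum_add]
  refine ENNReal.tsum_le_tsum fun μ => ?_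
  -- reduce the inner tsum over a to a finite sum over μ.support
  have hg0 : ∀ a ∉ μ.support, g a μ = 0 := by
    intro a ha
    have : μ a = 0 := Finsupp.notMem_support_iff.1 ha
    simp [hg, this]
  rw [tsum_eq_sum hg0]
  -- rewrite the RHS product
  have hrhs : μ.prod (fun a n => ((x a + u a : ℝ≥0) : ℝ≥0∞) ^ n)
      = ∏ b ∈ μ.support, ((x b : ℝ≥0∞) + (u b : ℝ≥0∞)) ^ μ b := by
    refine Finset.prod_congr rfl fun b _ => ?_
    push_cast
    ring
  rw [hrhs]
  -- rewrite each g a μ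
  have hga : ∀ a ∈ μ.support, g a μ = (u a : ℝ≥0∞) * (μ a : ℝ≥0∞) * (c μ : ℝ≥0∞) *
      ((x a : ℝ≥0∞) ^ (μ a - 1) * ∏ b ∈ μ.support.erase a, (x b : ℝ≥0∞) ^ μ b) := by
    intro a ha
    have hX : Xp (μ - Finsupp.single a 1)
        = (x a : ℝ≥0∞) ^ (μ a - 1) * ∏ b ∈ μ.support.erase a, (x b : ℝ≥0∞) ^ μ b := by
      show (μ - Finsupp.single a 1).prod (fun b n => (x b : ℝ≥0∞) ^ n) = _
      rw [Finsupp.prod_of_support_subset _ Finsupp.support_tsub _ (fun b _ => pow_zero _)]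
      rw [← Finset.mul_prod_erase μ.support _ ha]
      congr 1
      · rw [Finsupp.tsub_apply, Finsupp.single_eq_same]
      · refine Finset.prod_congr rfl fun b hb => ?_
        have hb' : b ≠ a := Finset.ne_of_mem_erase hb
        rw [Finsupp.tsub_apply, Finsupp.single_eq_of_ne' (Ne.symm hb'), Nat.sub_zero]
    simp only [hg, hX]
  rw [Finset.sum_congr rfl hga]
  have key := aux_fin μ.support (fun b => (x b : ℝ≥0∞)) (fun b => (u b : ℝ≥0∞)) (fun b => μ b)
  calc (c μ : ℝ≥0∞) * Xp μ + ∑ a ∈ μ.support, (u a : ℝ≥0∞) * (μ a : ℝ≥0∞) * (c μ : ℝ≥0∞) *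
        ((x a : ℝ≥0∞) ^ (μ a - 1) * ∏ b ∈ μ.support.erase a, (x b : ℝ≥0∞) ^ μ b)
      = (c μ : ℝ≥0∞) * ((∏ b ∈ μ.support, (x b : ℝ≥0∞) ^ μ b) +
          ∑ a ∈ μ.support, (μ a : ℝ≥0∞) * (u a : ℝ≥0∞) * (x a : ℝ≥0∞) ^ (μ a - 1) *
            ∏ b ∈ μ.support.erase a, (x b : ℝ≥0∞) ^ μ b) := by
        rw [mul_add, Finset.mul_sum]
        congr 1
        refine Finset.sum_congr rfl fun a _ => ?_
        ring
    _ ≤ (c μ : ℝ≥0∞) * ∏ b ∈ μ.support, ((x b : ℝ≥0∞) + (u b : ℝ≥0∞)) ^ μ b :=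
        mul_le_mul_right key _
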